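/- High-noise coordinates are rare: fix a finite nonempty set U = {u_1,…,u_M} ⊂ ℝ \ {0} with u_min = min_m |u_m| and u_max = max_m |u_m|, and assume u_min ∈ U (the minimal absolute value is attained at a positive element of U). Let naturals 1 ≤ k < N, σ² > 0, σ̃² = σ²/log(N/k), and for t ∈ ℝ let h(t) = ∑_{m=1}^M exp( (u_max·|u_m| − u_m²/2 + u_m·t)/σ̃² ). If ω is a real Gaussian random variable with mean 0 and variance σ̃², then ℙ( h(ω) ≤ 1 ) ≤ (N/k)^{−C₁,₂}, where C₁,₂ = (u_max − u_min/2)²/(2σ²). -/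

import Mathlib

open MeasureTheory ProbabilityTheory Real Filter Finset
open scoped ENNReal NNReal Classical

lemma tilt_identity {v : ℝ≥0} (hv : v ≠ 0) (t x : ℝ) :
    gaussianPDFReal 0 v x * rexp (t * x)
      = rexp (t ^ 2 * v / 2) * gaussianPDFReal (t * v) v x := by
  have hv' : (v : ℝ) ≠ 0 := by exact_mod_cast hv
  simp only [gaussianPDFReal]
  have hexp : -(x - 0) ^ 2 / (2 * (v:ℝ)) + t * x
      = t ^ 2 * v / 2 + -(x - t * v) ^ 2 / (2 * v) := by field_simp; ring
  rw [mul_assoc, ← Real.exp_add, hexp, Real.exp_add]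
  ring

lemma mgf_gaussianReal0 {v : ℝ≥0} (hv : v ≠ 0) (t : ℝ) :
    mgf id (gaussianReal 0 v) t = rexp (t ^ 2 * v / 2) := by
  have hmeas : Measurable (fun x : ℝ => (gaussianPDFReal 0 v x).toNNReal) :=
    (measurable_gaussianPDFReal 0 v).real_toNNReal
  have hdens : gaussianReal 0 v
      = volume.withDensity (fun x => ((gaussianPDFReal 0 v x).toNNReal : ℝ≥0∞)) := by
    rw [gaussianReal_of_var_ne_zero 0 hv]; rfl
  rw [mgf, hdens, integral_withDensity_eq_integral_smul hmeas]
  have : ∀ x : ℝ, (gaussianPDFReal 0 v x).toNNReal • rexp (t * id x)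
      = rexp (t ^ 2 * v / 2) * gaussianPDFReal (t * v) v x := by
    intro x
    rw [NNReal.smul_def, smul_eq_mul, Real.coe_toNNReal _ (gaussianPDFReal_nonneg 0 v x)]
    exact tilt_identity hv t x
  rw [funext this]
  rw [integral_const_mul, integral_gaussianPDFReal_eq_one _ hv, mul_one]

lemma integrable_exp_gaussianReal0 {v : ℝ≥0} (hv : v ≠ 0) (t : ℝ) :
    Integrable (fun x : ℝ => rexp (t * id x)) (gaussianReal 0 v) := by
  have hmeas : Measurable (fun x : ℝ => (gaussianPDFReal 0 v x).toNNReal) :=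
    (measurable_gaussianPDFReal 0 v).real_toNNReal
  have hdens : gaussianReal 0 v
      = volume.withDensity (fun x => ((gaussianPDFReal 0 v x).toNNReal : ℝ≥0∞)) := by
    rw [gaussianReal_of_var_ne_zero 0 hv]; rfl
  rw [hdens, integrable_withDensity_iff_integrable_coe_smul hmeas]
  have heq : (fun x : ℝ => ((gaussianPDFReal 0 v x).toNNReal : ℝ) • rexp (t * id x))
      = fun x => rexp (t ^ 2 * v / 2) * gaussianPDFReal (t * v) v x := by
    funext x
    rw [smul_eq_mul, Real.coe_toNNReal _ (gaussianPDFReal_nonneg 0 v x)]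
    exact tilt_identity hv t x
  rw [heq]
  exact (integrable_gaussianPDFReal (t * v) v).const_mul _

lemma gauss_tail {v : ℝ≥0} (hv : v ≠ 0) {a : ℝ} (ha : 0 < a) :
    ((gaussianReal 0 v) {x : ℝ | x ≤ -a}).toReal ≤ rexp (-a ^ 2 / (2 * v)) := by
  have hv' : (0:ℝ) < (v : ℝ) := by positivity
  have ht : -(a / ↑v) ≤ 0 := neg_nonpos.mpr (by positivity)
  have h := measure_le_le_exp_mul_mgf (μ := gaussianReal 0 v) (X := id) (t := -(a / v)) (-a) ht
    (integrable_exp_gaussianReal0 hv _)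
  rw [mgf_gaussianReal0 hv] at h
  refine h.trans_eq ?_
  rw [← Real.exp_add]
  congr 1
  field_simp
  ring

theorem high_noise_coordinates_rare
    (U : Finset ℝ) (hU : U.Nonempty) (hU0 : ∀ u ∈ U, u ≠ 0)
    (umin umax : ℝ) (humin : IsLeast {t : ℝ | ∃ u ∈ U, t = |u|} umin)
    (humax : IsGreatest {t : ℝ | ∃ u ∈ U, t = |u|} umax)
    (huminU : umin ∈ U)
    (k N : ℕ) (hk : 1 ≤ k) (hkN : k < N) (σ2 : ℝ) (hσ : 0 < σ2)
    (σt2 : ℝ) (hσt2 : σt2 = σ2 / Real.log ((N : ℝ) / (k : ℝ))) :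
    ((gaussianReal 0 σt2.toNNReal)
        {t : ℝ | (∑ u ∈ U, Real.exp ((umax * |u| - u ^ 2 / 2 + u * t) / σt2)) ≤ 1}).toReal
      ≤ ((N : ℝ) / (k : ℝ)) ^ (-((umax - umin / 2) ^ 2 / (2 * σ2))) := by
  have hk' : (0:ℝ) < (k:ℝ) := by exact_mod_cast hk
  have hNk : (1:ℝ) < (N:ℝ) / (k:ℝ) := (one_lt_div hk').mpr (by exact_mod_cast hkN)
  have hL : 0 < Real.log ((N:ℝ) / (k:ℝ)) := Real.log_pos hNk
  have hσt : 0 < σt2 := by rw [hσt2]; positivity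
  have hv : σt2.toNNReal ≠ 0 := by
    simp [Real.toNNReal_eq_zero, not_le, hσt]
  have hvr : ((σt2.toNNReal : ℝ≥0) : ℝ) = σt2 := Real.coe_toNNReal _ hσt.le
  -- umin is positive
  obtain ⟨u0, hu0U, hu0⟩ := humin.1
  have huminpos : 0 < umin := hu0 ▸ abs_pos.mpr (hU0 u0 hu0U)
  have hminmax : umin ≤ umax := humax.2 ⟨umin, huminU, (abs_of_pos huminpos).symm⟩
  set a : ℝ := umax - umin / 2 with ha_def
  have ha : 0 < a := by simp only [ha_def]; linarith
  -- the event is contained in the left tail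
  have hsub : {t : ℝ | (∑ u ∈ U, Real.exp ((umax * |u| - u ^ 2 / 2 + u * t) / σt2)) ≤ 1}
      ⊆ {x : ℝ | x ≤ -a} := by
    intro t ht
    simp only [Set.mem_setOf_eq] at ht ⊢
    have hterm : Real.exp ((umax * |umin| - umin ^ 2 / 2 + umin * t) / σt2)
        ≤ ∑ u ∈ U, Real.exp ((umax * |u| - u ^ 2 / 2 + u * t) / σt2) :=
      Finset.single_le_sum (f := fun u => Real.exp ((umax * |u| - u ^ 2 / 2 + u * t) / σt2))
        (fun u _ => (Real.exp_pos _).le) huminU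
    have h1 : (umax * |umin| - umin ^ 2 / 2 + umin * t) / σt2 ≤ 0 :=
      Real.exp_le_one_iff.mp (hterm.trans ht)
    have h2 : umax * |umin| - umin ^ 2 / 2 + umin * t ≤ 0 := by
      have := mul_le_mul_of_nonneg_right h1 hσt.le
      rwa [div_mul_cancel₀ _ hσt.ne', zero_mul] at this
    rw [abs_of_pos huminpos] at h2
    have h3 : umin * t ≤ umin * (-a) := by
      simp only [ha_def]
      nlinarith [h2]
    exact (mul_le_mul_iff_right₀ huminpos).mp h3
  have hmono : ((gaussianReal 0 σt2.toNNReal)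
        {t : ℝ | (∑ u ∈ U, Real.exp ((umax * |u| - u ^ 2 / 2 + u * t) / σt2)) ≤ 1}).toReal
      ≤ ((gaussianReal 0 σt2.toNNReal) {x : ℝ | x ≤ -a}).toReal :=
    ENNReal.toReal_mono (measure_ne_top _ _) (measure_mono hsub)
  refine (hmono.trans (gauss_tail hv ha)).trans_eq ?_
  rw [Real.rpow_def_of_pos (by positivity : (0:ℝ) < (N:ℝ)/(k:ℝ)), hvr]
  congr 1
  rw [hσt2]
  field_simp
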